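/- Let t' ∈ [0,T], ε > 0, x₀' ∈ ℝ^d, and suppose x₁ minimizes x ↦ E(t',x) + Ψ(x − x₀') over the closed ball {x : ‖x − x₀'‖ ≤ ε}. Then ⟨D_x E(t',x₁), x₁ − x₀'⟩ + Ψ(x₁ − x₀') ≤ 0. -/

import Mathlib

open Filter MeasureTheory Set
open scoped Topology NNReal

section Setup

variable {X : Type*} [NormedAddCommGroup X] [NormedSpace ℝ X]

/-- The set of partition sums defining the `Ψ`-dissipation of `u` on `[a,b]`:
sums `∑ Ψ(u(s_i) − u(s_{i−1}))` over finite strictly increasing partitions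
`a = s₀ < s₁ < ⋯ < s_n = b`. -/
def dissSums (Ψ : X → ℝ) (u : ℝ → X) (a b : ℝ) : Set ℝ :=
  { S | ∃ (n : ℕ) (σ : Fin (n + 1) → ℝ), StrictMono σ ∧ σ 0 = a ∧ σ (Fin.last n) = b ∧
      S = ∑ i : Fin n, Ψ (u (σ i.succ) - u (σ i.castSucc)) }

/-- The `Ψ`-dissipation `Diss_Ψ(u;[a,b])`. -/
noncomputable def dissTV (Ψ : X → ℝ) (u : ℝ → X) (a b : ℝ) : ℝ :=
  sSup (dissSums Ψ u a b)

/-- The subdifferential `∂Ψ(0) = {η : ⟨η,v⟩ ≤ Ψ(v) for all v}`. -/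
def subdiffZero (Ψ : X → ℝ) : Set (X →L[ℝ] ℝ) :=
  { η | ∀ v, η v ≤ Ψ v }

/-- `inf_{η ∈ ∂Ψ(0)} ‖ξ + η‖_*`, where `‖·‖_*` is the dual (operator) norm. -/
noncomputable def distToSubdiff (Ψ : X → ℝ) (ξ : X →L[ℝ] ℝ) : ℝ :=
  sInf ((fun η => ‖ξ + η‖) '' subdiffZero Ψ)

/-- The cost `Δ_new(t;a,b)`: infimum over Lipschitz paths `γ : [0,1] → X` with
`γ(0)=a`, `γ(1)=b` of `∫₀¹ Ψ(γ'(s)) + (inf_{z∈∂Ψ(0)} ‖D_xE(t,γ(s))+z‖_*)·‖γ'(s)‖ ds`. -/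
noncomputable def deltaNew (DE : ℝ → X → X →L[ℝ] ℝ) (Ψ : X → ℝ) (t : ℝ) (a b : X) : ℝ :=
  sInf { c | ∃ (K : ℝ≥0) (γ : ℝ → X), LipschitzOnWith K γ (Icc 0 1) ∧ γ 0 = a ∧ γ 1 = b ∧
      c = ∫ s in (0:ℝ)..1, (Ψ (deriv γ s) + distToSubdiff Ψ (DE t (γ s)) * ‖deriv γ s‖) }

/-- The new dissipation `Diss_new(u;[t₁,t₂])`, with prescribed one-sided limit
functions `uL`, `uR`, summing over the jump set the corrections `Δ_new − Ψ`. -/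
noncomputable def dissNew (DE : ℝ → X → X →L[ℝ] ℝ) (Ψ : X → ℝ)
    (u uL uR : ℝ → X) (t₁ t₂ : ℝ) : ℝ :=
  dissTV Ψ u t₁ t₂
    + ∑' t : ({ s | ¬ ContinuousAt u s } ∩ Ioo t₁ t₂ : Set ℝ),
        (deltaNew DE Ψ (t : ℝ) (uL (t : ℝ)) (u (t : ℝ)) +
          deltaNew DE Ψ (t : ℝ) (u (t : ℝ)) (uR (t : ℝ))
          - Ψ (u (t : ℝ) - uL (t : ℝ)) - Ψ (uR (t : ℝ) - u (t : ℝ)))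
    + (deltaNew DE Ψ t₁ (u t₁) (uR t₁) - Ψ (uR t₁ - u t₁))
    + (deltaNew DE Ψ t₂ (uL t₂) (u t₂) - Ψ (u t₂ - uL t₂))

/-- `pts` is a discretized solution with initial datum `x₀`, neighborhood size `ε`,
time-step `τ` and `N` steps: `pts 0 = x₀` and each `pts i` minimizes
`x ↦ E(iτ, x) + Ψ(x − pts (i−1))` over the closed ball of radius `ε` around `pts (i−1)`. -/
def IsDiscreteSol (E : ℝ → X → ℝ) (Ψ : X → ℝ) (x₀ : X) (ε τ : ℝ) (N : ℕ)
    (pts : ℕ → X) : Prop :=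
  pts 0 = x₀ ∧ ∀ i : ℕ, 1 ≤ i → i ≤ N →
    ‖pts i - pts (i - 1)‖ ≤ ε ∧
    ∀ x : X, ‖x - pts (i - 1)‖ ≤ ε →
      E ((i : ℝ) * τ) (pts i) + Ψ (pts i - pts (i - 1)) ≤
        E ((i : ℝ) * τ) x + Ψ (x - pts (i - 1))

/-- The piecewise-constant interpolant `x^{ε,τ}`: equal to `pts (i−1)` on
`[(i−1)τ, iτ)` for `i = 1,…,N`, and to `pts N` on `[Nτ, T]`. -/
noncomputable def discInterp (pts : ℕ → X) (τ : ℝ) (N : ℕ) (t : ℝ) : X :=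
  pts (min N ⌊t / τ⌋₊)

end Setup

theorem stmt_14
    {X : Type*} [NormedAddCommGroup X] [NormedSpace ℝ X] [FiniteDimensional ℝ X]
    [Nontrivial X]
    (T : ℝ) (hT : 0 < T)
    (E Et : ℝ → X → ℝ) (DE : ℝ → X → X →L[ℝ] ℝ)
    (hEnn : ∀ t ∈ Set.Icc (0:ℝ) T, ∀ x : X, 0 ≤ E t x)
    (hEt : ∀ x : X, ∀ t ∈ Set.Icc (0:ℝ) T,
      HasDerivWithinAt (fun s => E s x) (Et t x) (Set.Icc 0 T) t)
    (hDE : ∀ t ∈ Set.Icc (0:ℝ) T, ∀ x : X, HasFDerivAt (fun y => E t y) (DE t x) x)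
    (hEtc : ContinuousOn (fun p : ℝ × X => Et p.1 p.2) (Set.Icc 0 T ×ˢ Set.univ))
    (hDEc : ContinuousOn (fun p : ℝ × X => DE p.1 p.2) (Set.Icc 0 T ×ˢ Set.univ))
    (Ψ : X → ℝ) (hΨnn : ∀ v, 0 ≤ Ψ v) (hΨconv : ConvexOn ℝ Set.univ Ψ)
    (hΨhom : ∀ c : ℝ, 0 ≤ c → ∀ v : X, Ψ (c • v) = c * Ψ v)
    (hΨpos : ∀ v : X, v ≠ 0 → 0 < Ψ v)
    (t' : ℝ) (ht' : t' ∈ Set.Icc (0:ℝ) T)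
    (ε : ℝ) (hε : 0 < ε) (x₀' x₁ : X)
    (hx₁mem : ‖x₁ - x₀'‖ ≤ ε)
    (hx₁min : ∀ x : X, ‖x - x₀'‖ ≤ ε →
      E t' x₁ + Ψ (x₁ - x₀') ≤ E t' x + Ψ (x - x₀')) :
    DE t' x₁ (x₁ - x₀') + Ψ (x₁ - x₀') ≤ 0 := by
  set v := x₁ - x₀' with hv
  set g : ℝ → ℝ := fun θ => E t' (x₀' + θ • v) with hg
  have hx1 : x₀' + (1:ℝ) • v = x₁ := by simp [hv]
  have hline : HasDerivAt (fun θ : ℝ => x₀' + θ • v) v 1 := by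
    simpa using (HasDerivAt.const_add x₀' ((hasDerivAt_id (1:ℝ)).smul_const v))
  have hgd : HasDerivAt g (DE t' x₁ v) 1 := by
    have h := (hDE t' ht' (x₀' + (1:ℝ) • v)).comp_hasDerivAt 1 hline
    rw [hx1] at h
    exact h
  have hslope : Tendsto (slope g 1) (𝓝[<] (1:ℝ)) (𝓝 (DE t' x₁ v)) :=
    (hasDerivAt_iff_tendsto_slope.mp hgd).mono_left
      (nhdsWithin_mono _ (fun x hx => ne_of_lt hx))
  have hkey : DE t' x₁ v ≤ -Ψ v := by
    refine le_of_tendsto hslope ?_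
    filter_upwards [Ioo_mem_nhdsLT_of_mem (by norm_num : (1:ℝ) ∈ Set.Ioc 0 1)]
      with θ hθ
    obtain ⟨h0, h1⟩ := hθ
    have hmem : ‖(x₀' + θ • v) - x₀'‖ ≤ ε := by
      have : ‖θ • v‖ = θ * ‖v‖ := by
        rw [norm_smul, Real.norm_eq_abs, abs_of_pos h0]
      rw [add_sub_cancel_left, this]
      calc θ * ‖v‖ ≤ 1 * ‖v‖ := by
            apply mul_le_mul_of_nonneg_right h1.le (norm_nonneg _)
        _ ≤ ε := by simpa using hx₁mem
    have hmin := hx₁min (x₀' + θ • v) hmem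
    have hΨθ : Ψ ((x₀' + θ • v) - x₀') = θ * Ψ v := by
      rw [add_sub_cancel_left, hΨhom θ h0.le]
    rw [hΨθ] at hmin
    -- hmin : E t' x₁ + Ψ v ≤ g θ + θ * Ψ v
    have hg1 : g 1 = E t' x₁ := by rw [hg]; simp only [one_smul]; rw [show x₀' + v = x₁ from by simpa using hx1]
    have hge : (1 - θ) * Ψ v ≤ g θ - g 1 := by
      rw [hg1]; nlinarith [hmin]
    have hθ1 : θ - 1 < 0 := by linarith
    rw [slope_def_field, div_le_iff_of_neg hθ1]
    calc -Ψ v * (θ - 1) = (1 - θ) * Ψ v := by ring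
      _ ≤ g θ - g 1 := hge
  have : DE t' x₁ v ≤ -Ψ v := hkey
  linarith
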